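/- For the density q(x) = (θ/2)e^{−θ|x|} on ℝ (Laplace density with parameter θ > 0) and its translates q_r(x) = q(x − r), the squared Hellinger distance satisfies h²(q_r, q_{r'}) = 1 − e^{−θ|r−r'|/2}(1 + θ|r−r'|/2) for all real r, r'. -/

import Mathlib

open MeasureTheory Real

open Set

lemma int_exp_Ioi' (θ c : ℝ) (hθ : 0 < θ) :
    ∫ x in Ioi c, Real.exp (-(θ * x)) = Real.exp (-(θ * c)) / θ := by
  have h := integral_comp_mul_left_Ioi (fun y => Real.exp (-y)) c hθ
  simp only [smul_eq_mul] at h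
  rw [h, integral_exp_neg_Ioi]
  field_simp

lemma intOn_exp_Ioi' (θ c : ℝ) (hθ : 0 < θ) :
    IntegrableOn (fun x : ℝ => Real.exp (-(θ * x))) (Ioi c) := by
  simpa [neg_mul] using exp_neg_integrableOn_Ioi c hθ

lemma int_exp_Iic' (θ : ℝ) (hθ : 0 < θ) :
    ∫ x in Iic (0:ℝ), Real.exp (θ * x) = 1 / θ := by
  have h := integral_comp_neg_Ioi (c := (0:ℝ)) (f := fun x => Real.exp (θ * x))
  rw [neg_zero] at h
  rw [← h]
  have : ∀ x : ℝ, Real.exp (θ * -x) = Real.exp (-(θ * x)) := by intro x; ring_nf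
  simp_rw [this, int_exp_Ioi' θ 0 hθ, mul_zero, neg_zero, Real.exp_zero]

lemma intOn_exp_Iic' (θ : ℝ) (hθ : 0 < θ) :
    IntegrableOn (fun x : ℝ => Real.exp (θ * x)) (Iic (0:ℝ)) := by
  have h1 : Integrable ((Ioi (0:ℝ)).indicator fun x => Real.exp (-(θ * x))) := by
    exact (integrable_indicator_iff measurableSet_Ioi).mpr (intOn_exp_Ioi' θ 0 hθ)
  have h2 := h1.comp_neg
  have h3 : (fun x : ℝ => (Ioi (0:ℝ)).indicator (fun x => Real.exp (-(θ * x))) (-x))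
      = (Iio (0:ℝ)).indicator fun x => Real.exp (θ * x) := by
    ext x
    simp only [Set.indicator_apply, mem_Ioi, mem_Iio]
    by_cases hx : x < 0
    · rw [if_pos (by linarith), if_pos hx, mul_neg, neg_neg]
    · rw [if_neg (by intro h; exact hx (by linarith)), if_neg hx]
  rw [h3] at h2
  rw [integrableOn_Iic_iff_integrableOn_Iio, ← integrable_indicator_iff measurableSet_Iio]
  exact h2

lemma laplace_int (θ : ℝ) (hθ : 0 < θ) (d : ℝ) (hd : 0 ≤ d) :
    ∫ x : ℝ, θ / 2 * Real.exp (-(θ * (|x - d| + |x|)) / 2)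
      = Real.exp (-(θ * d) / 2) * (1 + θ * d / 2) := by
  set f : ℝ → ℝ := fun x => θ / 2 * Real.exp (-(θ * (|x - d| + |x|)) / 2) with hf
  have hEq1 : EqOn f (fun x => (θ / 2 * Real.exp (-(θ * d) / 2)) * Real.exp (θ * x)) (Iic (0:ℝ)) := by
    intro x hx
    simp only [mem_Iic] at hx
    simp only [hf]
    rw [abs_of_nonpos (by linarith), abs_of_nonpos hx, mul_assoc, ← Real.exp_add]
    congr 1
    ring
  have hEq2 : EqOn f (fun _ => θ / 2 * Real.exp (-(θ * d) / 2)) (Ioc (0:ℝ) d) := by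
    intro x hx
    simp only [mem_Ioc] at hx
    simp only [hf]
    rw [abs_of_nonpos (by linarith), abs_of_pos hx.1]
    congr 2
    ring
  have hEq3 : EqOn f (fun x => (θ / 2 * Real.exp ((θ * d) / 2)) * Real.exp (-(θ * x))) (Ioi d) := by
    intro x hx
    simp only [mem_Ioi] at hx
    simp only [hf]
    rw [abs_of_nonneg (by linarith), abs_of_pos (by linarith), mul_assoc, ← Real.exp_add]
    congr 1
    ring
  have hI1 : IntegrableOn f (Iic (0:ℝ)) := by
    have h : IntegrableOn (fun x => (θ / 2 * Real.exp (-(θ * d) / 2)) * Real.exp (θ * x)) (Iic (0:ℝ)) :=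
      (intOn_exp_Iic' θ hθ).const_mul _
    exact h.congr_fun hEq1.symm measurableSet_Iic
  have hI2 : IntegrableOn f (Ioc (0:ℝ) d) := by
    have h : IntegrableOn (fun _ : ℝ => θ / 2 * Real.exp (-(θ * d) / 2)) (Ioc (0:ℝ) d) :=
      integrableOn_const measure_Ioc_lt_top.ne
    exact h.congr_fun hEq2.symm measurableSet_Ioc
  have hI3 : IntegrableOn f (Ioi d) := by
    have h : IntegrableOn (fun x => (θ / 2 * Real.exp ((θ * d) / 2)) * Real.exp (-(θ * x))) (Ioi d) :=
      (intOn_exp_Ioi' θ d hθ).const_mul _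
    exact h.congr_fun hEq3.symm measurableSet_Ioi
  have hI23 : IntegrableOn f (Ioi (0:ℝ)) := by
    have := hI2.union hI3
    rwa [Ioc_union_Ioi_eq_Ioi hd] at this
  have hsplit2 : ∫ x in Ioi (0:ℝ), f x = (∫ x in Ioc (0:ℝ) d, f x) + ∫ x in Ioi d, f x := by
    rw [← Ioc_union_Ioi_eq_Ioi hd]
    exact setIntegral_union (Ioc_disjoint_Ioi le_rfl) measurableSet_Ioi hI2 hI3
  have hsplit : ∫ x : ℝ, f x = (∫ x in Iic (0:ℝ), f x) + ∫ x in Ioi (0:ℝ), f x :=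
    (intervalIntegral.integral_Iic_add_Ioi hI1 hI23).symm
  have e1 : ∫ x in Iic (0:ℝ), f x = Real.exp (-(θ * d) / 2) / 2 := by
    rw [setIntegral_congr_fun measurableSet_Iic hEq1, integral_const_mul, int_exp_Iic' θ hθ]
    field_simp
  have e2 : ∫ x in Ioc (0:ℝ) d, f x = d * (θ / 2 * Real.exp (-(θ * d) / 2)) := by
    rw [setIntegral_congr_fun measurableSet_Ioc hEq2, setIntegral_const, smul_eq_mul,
      Real.volume_real_Ioc, sub_zero, max_eq_left hd]
  have e3 : ∫ x in Ioi d, f x = Real.exp (-(θ * d) / 2) / 2 := by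
    rw [setIntegral_congr_fun measurableSet_Ioi hEq3, integral_const_mul, int_exp_Ioi' θ d hθ]
    have h : θ / 2 * Real.exp (θ * d / 2) * (Real.exp (-(θ * d)) / θ)
        = (Real.exp (θ * d / 2) * Real.exp (-(θ * d))) / 2 := by
      field_simp
    rw [h, ← Real.exp_add]
    congr 1
    ring
  rw [hsplit, hsplit2, e1, e2, e3]
  ring

/-- For the Laplace density `q(x) = (θ/2)e^{−θ|x|}` and its translates `q_r(x) = q(x−r)`,
the squared Hellinger distance `h²(q_r, q_{r'}) = 1 − ∫ √(q_r q_{r'}) dx` satisfies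
`h²(q_r, q_{r'}) = 1 − e^{−θ|r−r'|/2}(1 + θ|r−r'|/2)`. -/
theorem stmt_8 (θ : ℝ) (hθ : 0 < θ) (r r' : ℝ) :
    1 - (∫ x : ℝ, Real.sqrt ((θ / 2 * Real.exp (-(θ * |x - r|)))
            * (θ / 2 * Real.exp (-(θ * |x - r'|)))))
      = 1 - Real.exp (-(θ * |r - r'|) / 2) * (1 + θ * |r - r'| / 2) := by
  have hpt : ∀ x : ℝ, Real.sqrt ((θ / 2 * Real.exp (-(θ * |x - r|)))
        * (θ / 2 * Real.exp (-(θ * |x - r'|))))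
      = θ / 2 * Real.exp (-(θ * (|x - r| + |x - r'|)) / 2) := by
    intro x
    have e2 : (Real.exp (-(θ * (|x - r| + |x - r'|)) / 2))^2
        = Real.exp (-(θ * |x - r|)) * Real.exp (-(θ * |x - r'|)) := by
      rw [sq, ← Real.exp_add, ← Real.exp_add]
      congr 1
      ring
    have h : (θ / 2 * Real.exp (-(θ * |x - r|))) * (θ / 2 * Real.exp (-(θ * |x - r'|)))
        = (θ / 2 * Real.exp (-(θ * (|x - r| + |x - r'|)) / 2))^2 := by
      rw [mul_pow, e2]
      ring
    rw [h, Real.sqrt_sq (by positivity)]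
  simp_rw [hpt]
  congr 1
  have hshift := integral_add_right_eq_self (μ := volume)
    (fun x : ℝ => θ / 2 * Real.exp (-(θ * (|x - r| + |x - r'|)) / 2)) r'
  rw [← hshift]
  rcases le_total r' r with h | h
  · rw [abs_of_nonneg (by linarith : (0:ℝ) ≤ r - r')]
    have heq : ∀ x : ℝ, θ / 2 * Real.exp (-(θ * (|x + r' - r| + |x + r' - r'|)) / 2)
        = θ / 2 * Real.exp (-(θ * (|x - (r - r')| + |x|)) / 2) := by
      intro x
      rw [show x + r' - r = x - (r - r') by ring, show x + r' - r' = x by ring]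
    simp_rw [heq]
    exact laplace_int θ hθ (r - r') (by linarith)
  · rw [abs_of_nonpos (by linarith : r - r' ≤ 0), neg_sub]
    rw [← integral_neg_eq_self
      (fun x : ℝ => θ / 2 * Real.exp (-(θ * (|x + r' - r| + |x + r' - r'|)) / 2)) volume]
    have heq : ∀ x : ℝ, θ / 2 * Real.exp (-(θ * (|-x + r' - r| + |-x + r' - r'|)) / 2)
        = θ / 2 * Real.exp (-(θ * (|x - (r' - r)| + |x|)) / 2) := by
      intro x
      rw [show -x + r' - r = -(x - (r' - r)) by ring, abs_neg,
        show -x + r' - r' = -x by ring, abs_neg]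
    simp_rw [heq]
    exact laplace_int θ hθ (r' - r) (by linarith)
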